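/- Suppose A ⊕ C = ℤ is a tiling with A a finite set of nonnegative integers, k > 1, and C ⊆ kℤ. For i = 0,…,k−1 let A_i = {a ∈ A : a ≡ i (mod k)}. Then each A_i is nonempty, each (A_i − a_i)/k ⊕ C/k = ℤ is a tiling (where a_i = min A_i), and the elements of A are equally distributed modulo k: #A_i = (#A)/k for all i. -/

import Mathlib

/-- Tiling of ℤ by a finite set of nonnegative integers with translation set `C`. -/
def IsTilingN (A : Finset ℕ) (C : Set ℤ) : Prop :=
  ∀ z : ℤ, ∃! p : ℕ × ℤ, p.1 ∈ A ∧ p.2 ∈ C ∧ (p.1 : ℤ) + p.2 = z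

lemma natmod_of_int {a i k : ℕ} (h : (a:ℤ) % (k:ℤ) = (i:ℤ)) : a % k = i := by
  have h2 : ((a % k : ℕ):ℤ) = (i:ℤ) := by rw [Int.natCast_mod]; exact h
  exact_mod_cast h2

lemma int_of_natmod {a i k : ℕ} (h : a % k = i) : (a:ℤ) % (k:ℤ) = (i:ℤ) := by
  rw [← Int.natCast_mod, h]

lemma nat_sub_div {k m a i : ℕ} (hk : 0 < k) (hm : m % k = i) (ha : a % k = i)
    (hle : m ≤ a) : m + k * ((a - m) / k) = a := by
  have h1 := Nat.div_add_mod a k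
  have h2 := Nat.div_add_mod m k
  have hq : m / k ≤ a / k := by
    by_contra hq
    push_neg at hq
    have h3 : k * (a / k + 1) ≤ k * (m / k) := Nat.mul_le_mul_left k hq
    rw [Nat.mul_add, Nat.mul_one] at h3
    omega
  have hsub : a - m = k * (a / k - m / k) := by rw [Nat.mul_sub]; omega
  rw [hsub, Nat.mul_div_cancel_left _ hk, Nat.mul_sub]
  omega

lemma res_of_rep {C : Set ℤ} {k : ℕ} (hC : ∀ c ∈ C, (k : ℤ) ∣ c)
    {a : ℕ} {c z : ℤ} (hc : c ∈ C) (he : (a:ℤ) + c = z) :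
    (a:ℤ) % (k:ℤ) = z % (k:ℤ) := by
  obtain ⟨e, rfl⟩ := hC c hc
  rw [← he, Int.add_mul_emod_self_left]

lemma resclass_hit {A : Finset ℕ} {C : Set ℤ} {k : ℕ}
    (hC : ∀ c ∈ C, (k : ℤ) ∣ c) (h : IsTilingN A C) {i : ℕ} (hi : i < k) :
    ∃ a ∈ A, a % k = i := by
  obtain ⟨⟨a, c⟩, ⟨ha, hc, he⟩, _⟩ := h i
  refine ⟨a, ha, natmod_of_int ?_⟩
  rw [res_of_rep hC hc he, Int.emod_eq_of_lt (by positivity) (by exact_mod_cast hi)]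

lemma tiling_uniq {A : Finset ℕ} {C : Set ℤ} (h : IsTilingN A C) {a a' : ℕ} {c c' : ℤ}
    (ha : a ∈ A) (hc : c ∈ C) (ha' : a' ∈ A) (hc' : c' ∈ C)
    (heq : (a:ℤ) + c = (a':ℤ) + c') : a = a' ∧ c = c' := by
  obtain ⟨p, _, hu⟩ := h ((a:ℤ) + c)
  have h1 := hu (a, c) ⟨ha, hc, rfl⟩
  have h2 := hu (a', c') ⟨ha', hc', heq.symm⟩
  have h3 := h1.trans h2.symm
  exact ⟨congrArg Prod.fst h3, congrArg Prod.snd h3⟩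

lemma quot_tiling {A : Finset ℕ} {C : Set ℤ} {k : ℕ} (hk : 0 < k)
    (hC : ∀ c ∈ C, (k : ℤ) ∣ c) (h : IsTilingN A C) {i m : ℕ} (_ : i < k)
    (hm : m ∈ A.filter (fun a => a % k = i))
    (hmin : ∀ a ∈ A.filter (fun a => a % k = i), m ≤ a) :
    IsTilingN ((A.filter fun a => a % k = i).image fun a => (a - m) / k)
      {z : ℤ | (k : ℤ) * z ∈ C} := by
  have hk0' : (0:ℤ) < k := by exact_mod_cast hk
  have hmA : m ∈ A ∧ m % k = i := by simpa using hm
  intro z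
  obtain ⟨⟨a, c⟩, ⟨ha, hc, he⟩, hu⟩ := h ((k:ℤ) * z + m)
  have hares : (a:ℤ) % k = (i:ℤ) := by
    have h4 : ((k:ℤ) * z + m) % k = (m:ℤ) % k := by
      rw [add_comm]; exact Int.add_mul_emod_self_left ..
    rw [res_of_rep hC hc he, h4, int_of_natmod hmA.2]
  have haf : a ∈ A.filter (fun a => a % k = i) :=
    Finset.mem_filter.2 ⟨ha, natmod_of_int hares⟩
  have hma : m ≤ a := hmin a haf
  obtain ⟨e, rfl⟩ := hC c hc
  have hkey : m + k * ((a - m) / k) = a := nat_sub_div hk hmA.2 (natmod_of_int hares) hma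
  have hkeyZ : (m:ℤ) + (k:ℤ) * ((((a - m) / k : ℕ)):ℤ) = (a:ℤ) := by
    exact_mod_cast congrArg (Nat.cast : ℕ → ℤ) hkey
  have he' : (a:ℤ) + (k:ℤ) * e = (k:ℤ) * z + m := he
  have hd : ((((a - m) / k : ℕ)):ℤ) = z - e := by
    have h5 : (k:ℤ) * ((((a - m) / k : ℕ)):ℤ) = (k:ℤ) * (z - e) := by linarith
    exact mul_left_cancel₀ (ne_of_gt hk0') h5
  refine ⟨((a - m) / k, e), ⟨Finset.mem_image.2 ⟨a, haf, rfl⟩, ?_, ?_⟩, ?_⟩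
  · show (k:ℤ) * e ∈ C; exact hc
  · show ((((a - m) / k : ℕ)):ℤ) + e = z; rw [hd]; ring
  · rintro ⟨b, f⟩ ⟨hb, hf, hbf⟩
    obtain ⟨a', ha'f, rfl⟩ := Finset.mem_image.1 hb
    have ha'A := Finset.mem_filter.1 ha'f
    have hma' := hmin a' ha'f
    have hkey' : m + k * ((a' - m) / k) = a' := nat_sub_div hk hmA.2 ha'A.2 hma'
    have hkeyZ' : (m:ℤ) + (k:ℤ) * ((((a' - m) / k : ℕ)):ℤ) = (a':ℤ) := by
      exact_mod_cast congrArg (Nat.cast : ℕ → ℤ) hkey'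
    have hbf' : ((((a' - m) / k : ℕ)):ℤ) + f = z := hbf
    have hsum : (a':ℤ) + (k:ℤ) * f = (k:ℤ) * z + m := by
      linear_combination (k:ℤ) * hbf' - hkeyZ'
    have h6 := hu (a', (k:ℤ) * f) ⟨ha'A.1, hf, hsum⟩
    have h7 : a' = a := congrArg Prod.fst h6
    have h8 : (k:ℤ) * f = (k:ℤ) * e := congrArg Prod.snd h6
    have h9 : f = e := mul_left_cancel₀ (ne_of_gt hk0') h8
    rw [Prod.mk.injEq]
    exact ⟨by rw [h7], h9⟩

lemma card_le_aux {A : Finset ℕ} {C : Set ℤ} {k : ℕ} (hk : 1 < k)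
    (hC : ∀ c ∈ C, (k : ℤ) ∣ c) (h : IsTilingN A C) {i j : ℕ} (hi : i < k) (hj : j < k) :
    (A.filter fun a => a % k = i).card ≤ (A.filter fun a => a % k = j).card := by
  classical
  have hk0 : 0 < k := by omega
  have hk0' : (0:ℤ) < k := by exact_mod_cast hk0
  obtain ⟨a0, ha0, _⟩ := resclass_hit hC h (show 0 < k by omega)
  have hA : A.Nonempty := ⟨a0, ha0⟩
  set M := A.max' hA with hM
  set n := A.card with hn
  set Q := 2 * M * n * (n + 1) + 1 with hQ
  set N : ℤ := (k:ℤ) * (Q:ℤ) with hN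
  set Clow := (Finset.Ico (0:ℤ) (N - M)).filter (· ∈ C) with hClow
  set Cbig := (Finset.Ico (-(M:ℤ)) N).filter (· ∈ C) with hCbig
  -- cardinality of each residue class in [0, N)
  have cardS : ∀ r : ℕ, r < k →
      ((Finset.Ico (0:ℤ) N).filter (fun z => z % (k:ℤ) = (r:ℤ))).card = Q := by
    intro r hr
    have himg : (Finset.Ico (0:ℤ) N).filter (fun z => z % (k:ℤ) = (r:ℤ)) =
        (Finset.range Q).image (fun q : ℕ => (k:ℤ) * q + r) := by
      ext z
      simp only [Finset.mem_filter, Finset.mem_Ico, Finset.mem_image, Finset.mem_range]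
      constructor
      · rintro ⟨⟨h0, h1⟩, h2⟩
        refine ⟨(z / k).toNat, ?_, ?_⟩
        · have hzk : 0 ≤ z / k := Int.ediv_nonneg h0 (le_of_lt hk0')
          have hlt : z / k < (Q:ℤ) := by
            rw [Int.ediv_lt_iff_lt_mul hk0']
            calc z < N := h1
              _ = (Q:ℤ) * k := by rw [hN]; ring
          have h6 : (((z / k).toNat : ℕ) : ℤ) < (Q:ℤ) := by
            rw [Int.toNat_of_nonneg hzk]; exact hlt
          exact_mod_cast h6
        · have h3 := Int.mul_ediv_add_emod z k
          rw [h2] at h3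
          have hzk : 0 ≤ z / k := Int.ediv_nonneg h0 (le_of_lt hk0')
          rw [Int.toNat_of_nonneg hzk]
          linarith
      · rintro ⟨q, hq, rfl⟩
        have hq1 : (q:ℤ) + 1 ≤ (Q:ℤ) := by exact_mod_cast hq
        have hrk : (r:ℤ) < k := by exact_mod_cast hr
        refine ⟨⟨by positivity, ?_⟩, ?_⟩
        · calc (k:ℤ) * q + r < (k:ℤ) * q + k := by linarith
            _ = (k:ℤ) * (q + 1) := by ring
            _ ≤ (k:ℤ) * Q := by
              exact mul_le_mul_of_nonneg_left hq1 (le_of_lt hk0')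
            _ = N := by rw [hN]
        · rw [add_comm, Int.add_mul_emod_self_left,
            Int.emod_eq_of_lt (by positivity) hrk]
    rw [himg, Finset.card_image_of_injective _ ?_, Finset.card_range]
    intro x y hxy
    have h4 : (k:ℤ) * x = (k:ℤ) * y := by
      simp only at hxy
      linarith
    have h5 := mul_left_cancel₀ (ne_of_gt hk0') h4
    exact_mod_cast h5
  -- lower bound
  have lower : ∀ r : ℕ, r < k →
      (A.filter fun a => a % k = r).card * Clow.card ≤ Q := by
    intro r hr
    rw [← cardS r hr, ← Finset.card_product]
    apply Finset.card_le_card_of_injOn (fun p : ℕ × ℤ => (p.1:ℤ) + p.2)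
    · rintro ⟨a, c⟩ hp
      rw [Finset.mem_coe, Finset.mem_product] at hp
      obtain ⟨hpa, hpc⟩ := hp
      rw [Finset.mem_filter] at hpa
      rw [hClow, Finset.mem_filter, Finset.mem_Ico] at hpc
      obtain ⟨⟨hc0, hc1⟩, hcC⟩ := hpc
      have haM : (a:ℤ) ≤ (M:ℤ) := by exact_mod_cast A.le_max' a hpa.1
      simp only [Finset.mem_coe, Finset.mem_filter, Finset.mem_Ico]
      refine ⟨⟨by positivity, by linarith⟩, ?_⟩
      rw [← res_of_rep hC hcC rfl, int_of_natmod hpa.2]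
    · rintro ⟨a, c⟩ hp ⟨a', c'⟩ hp' heq
      simp only [Finset.mem_coe, Finset.mem_product, Finset.mem_filter, hClow,
        Finset.mem_Ico] at hp hp'
      obtain ⟨heq1, heq2⟩ := tiling_uniq h hp.1.1 hp.2.2 hp'.1.1 hp'.2.2 heq
      simp [heq1, heq2]
  -- upper bound
  have upper : ∀ r : ℕ, r < k →
      Q ≤ (A.filter fun a => a % k = r).card * Cbig.card := by
    intro r hr
    rw [← cardS r hr, ← Finset.card_product]
    apply Finset.card_le_card_of_injOn (fun z => (h z).choose)
    · intro z hz
      simp only [Finset.mem_coe, Finset.mem_filter, Finset.mem_Ico] at hz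
      obtain ⟨⟨h0, h1⟩, h2⟩ := hz
      obtain ⟨hpa, hpc, hpe⟩ := (h z).choose_spec.1
      rw [Finset.mem_coe, Finset.mem_product]
      constructor
      · rw [Finset.mem_filter]
        refine ⟨hpa, natmod_of_int ?_⟩
        rw [res_of_rep hC hpc hpe, h2]
      · rw [hCbig, Finset.mem_filter, Finset.mem_Ico]
        have haM : ((h z).choose.1 : ℤ) ≤ (M:ℤ) := by exact_mod_cast A.le_max' _ hpa
        have ha0 : (0:ℤ) ≤ ((h z).choose.1 : ℤ) := by positivity
        exact ⟨⟨by linarith, by linarith⟩, hpc⟩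
    · intro z hz z' hz' heq
      have e1 := (h z).choose_spec.1.2.2
      have e2 := (h z').choose_spec.1.2.2
      rw [← e1, ← e2]
      exact congrArg (fun p : ℕ × ℤ => (p.1:ℤ) + p.2) heq
  -- bridge
  have bridge : Cbig.card ≤ Clow.card + 2 * M := by
    have hsub : Cbig ⊆ Clow ∪ (Finset.Ico (-(M:ℤ)) 0 ∪ Finset.Ico (N - (M:ℤ)) N) := by
      intro c hc
      rw [hCbig, Finset.mem_filter, Finset.mem_Ico] at hc
      obtain ⟨⟨h1, h2⟩, h3⟩ := hc
      simp only [Finset.mem_union, hClow, Finset.mem_filter, Finset.mem_Ico]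
      by_cases h4 : c < 0
      · exact Or.inr (Or.inl ⟨h1, h4⟩)
      · by_cases h5 : c < N - M
        · exact Or.inl ⟨⟨by omega, h5⟩, h3⟩
        · exact Or.inr (Or.inr ⟨by omega, h2⟩)
    calc Cbig.card ≤ (Clow ∪ (Finset.Ico (-(M:ℤ)) 0 ∪ Finset.Ico (N - (M:ℤ)) N)).card :=
          Finset.card_le_card hsub
      _ ≤ Clow.card + (Finset.Ico (-(M:ℤ)) 0 ∪ Finset.Ico (N - (M:ℤ)) N).card :=
          Finset.card_union_le _ _
      _ ≤ Clow.card + ((Finset.Ico (-(M:ℤ)) 0).card + (Finset.Ico (N - (M:ℤ)) N).card) := by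
          exact Nat.add_le_add_left (Finset.card_union_le _ _) _
      _ ≤ Clow.card + 2 * M := by
          rw [Int.card_Ico, Int.card_Ico]
          have : (0 - -(M:ℤ)).toNat = M := by omega
          have : (N - (N - (M:ℤ))).toNat = M := by omega
          omega
  -- endgame
  by_contra hlt
  push_neg at hlt
  set ai := (A.filter fun a => a % k = i).card
  set aj := (A.filter fun a => a % k = j).card
  have h1 : ai * Clow.card ≤ Q := lower i hi
  have h2 : Q ≤ aj * Cbig.card := upper j hj
  have h3 : aj ≤ n := Finset.card_filter_le A _
  have h2' : Q ≤ aj * (Clow.card + 2 * M) :=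
    le_trans h2 (Nat.mul_le_mul_left aj bridge)
  have h5 : Clow.card ≤ 2 * M * aj := by nlinarith
  have h6 : aj * (Clow.card + 2 * M) ≤ aj * (2 * M * aj + 2 * M) :=
    Nat.mul_le_mul_left aj (by omega)
  have h7 : aj * (2 * M * aj + 2 * M) = 2 * M * aj * (aj + 1) := by ring
  have h8 : 2 * M * aj * (aj + 1) ≤ 2 * M * n * (n + 1) :=
    Nat.mul_le_mul (Nat.mul_le_mul (le_refl (2 * M)) h3) (by omega)
  have h9 : Q ≤ 2 * M * n * (n + 1) := le_trans h2' (le_trans h6 (h7 ▸ h8))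
  linarith [hQ.ge]

theorem tiling_with_C_in_kZ (A : Finset ℕ) (C : Set ℤ) (k : ℕ) (hk : 1 < k)
    (hC : ∀ c ∈ C, (k : ℤ) ∣ c) (h : IsTilingN A C) :
    ∀ i : ℕ, i < k →
      (A.filter fun a => a % k = i).Nonempty ∧
      (∃ m ∈ A.filter fun a => a % k = i,
        (∀ a ∈ A.filter fun a => a % k = i, m ≤ a) ∧
        IsTilingN ((A.filter fun a => a % k = i).image fun a => (a - m) / k)
          {z : ℤ | (k : ℤ) * z ∈ C}) ∧
      k * (A.filter fun a => a % k = i).card = A.card := by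
  classical
  intro i hi
  have hk0 : 0 < k := by omega
  obtain ⟨a0, ha0, ha0m⟩ := resclass_hit hC h hi
  have hne : (A.filter fun a => a % k = i).Nonempty :=
    ⟨a0, Finset.mem_filter.2 ⟨ha0, ha0m⟩⟩
  refine ⟨hne, ⟨(A.filter fun a => a % k = i).min' hne, Finset.min'_mem _ hne,
    fun a ha => Finset.min'_le _ a ha, ?_⟩, ?_⟩
  · exact quot_tiling hk0 hC h hi (Finset.min'_mem _ hne) (fun a ha => Finset.min'_le _ a ha)
  · -- cardinality
    have hcardeq : ∀ r, r < k →
        (A.filter fun a => a % k = r).card = (A.filter fun a => a % k = i).card :=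
      fun r hr => le_antisymm (card_le_aux hk hC h hr hi) (card_le_aux hk hC h hi hr)
    have hpart : A = (Finset.range k).biUnion (fun r => A.filter fun a => a % k = r) := by
      ext a
      simp only [Finset.mem_biUnion, Finset.mem_range, Finset.mem_filter]
      constructor
      · intro ha
        exact ⟨a % k, Nat.mod_lt a hk0, ha, rfl⟩
      · rintro ⟨r, _, ha, _⟩
        exact ha
    have hdisj : ∀ r ∈ Finset.range k, ∀ s ∈ Finset.range k, r ≠ s →
        Disjoint (A.filter fun a => a % k = r) (A.filter fun a => a % k = s) := by
      intro r _ s _ hrs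
      rw [Finset.disjoint_left]
      intro a har has
      rw [Finset.mem_filter] at har has
      exact hrs (har.2 ▸ has.2 ▸ rfl)
    calc k * (A.filter fun a => a % k = i).card
        = ∑ _r ∈ Finset.range k, (A.filter fun a => a % k = i).card := by
          rw [Finset.sum_const, Finset.card_range, smul_eq_mul]
      _ = ∑ r ∈ Finset.range k, (A.filter fun a => a % k = r).card :=
          Finset.sum_congr rfl (fun r hr => (hcardeq r (Finset.mem_range.1 hr)).symm)
      _ = A.card := by conv_rhs => rw [hpart, Finset.card_biUnion hdisj]
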